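/- Let σ(x) = 1/(1+e^{-x}) be the logistic function. If f : ℕ² → ℝ is fast-converging to a non-constant nice polynomial with positive leading coefficient, then σ∘f is fast-converging to the constant polynomial 1, i.e., for every real r there exists n₀ such that for all n ≥ n₀ and m ∈ {n-1,n+1}: |σ(f(m,n)) - 1| ≤ 1/n^r. -/

import Mathlib

/-- A two-variable real polynomial function is *nice* if it has the form
`p(X,Y) = Σ_{i=0}^{k} a_i · X^⌊i/2⌋ · Y^⌈i/2⌉`. -/
def IsNice (p : ℝ → ℝ → ℝ) : Prop :=
  ∃ (k : ℕ) (a : ℕ → ℝ), ∀ x y : ℝ,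
    p x y = ∑ i ∈ Finset.range (k + 1), a i * x ^ (i / 2) * y ^ ((i + 1) / 2)

/-- `p` is *co-nice* if swapping the variables yields a nice polynomial. -/
def IsCoNice (p : ℝ → ℝ → ℝ) : Prop := IsNice (fun x y => p y x)

/-- `f : ℕ² → ℝ` is *fast-converging* to `p` if for every real `r` there is `n₀`
such that for all `n ≥ n₀` and `m ∈ {n-1, n+1}`, `|f(m,n) - p(m,n)| ≤ 1/n^r`. -/
def FastConv (f : ℕ → ℕ → ℝ) (p : ℝ → ℝ → ℝ) : Prop :=
  ∀ r : ℝ, ∃ n₀ : ℕ, ∀ n : ℕ, n₀ ≤ n →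
    |f (n - 1) n - p ((n : ℝ) - 1) (n : ℝ)| ≤ 1 / (n : ℝ) ^ r ∧
    |f (n + 1) n - p ((n : ℝ) + 1) (n : ℝ)| ≤ 1 / (n : ℝ) ^ r

section Main
open Filter Real

lemma sigma_bound (x : ℝ) : |1 / (1 + Real.exp (-x)) - 1| ≤ Real.exp (-x) := by
  have h0 : 0 < Real.exp (-x) := Real.exp_pos _
  have h1 : (0:ℝ) < 1 + Real.exp (-x) := by linarith
  have h2 : 1 / (1 + Real.exp (-x)) - 1 = -(Real.exp (-x) / (1 + Real.exp (-x))) := by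
    field_simp
    ring
  rw [h2, abs_neg, abs_of_pos (div_pos h0 h1), div_le_iff₀ h1]
  nlinarith

lemma poly_tendsto (k : ℕ) (a : ℕ → ℝ) (c : ℝ) :
    Tendsto (fun x : ℝ => (∑ i ∈ Finset.range (k + 1),
      a i * (x + c) ^ (i / 2) * x ^ ((i + 1) / 2)) / x ^ k) atTop (nhds (a k)) := by
  have key : Tendsto (fun x : ℝ => ∑ i ∈ Finset.range (k + 1),
      a i * (1 + c * x⁻¹) ^ (i / 2) * (x⁻¹) ^ (k - i)) atTop
      (nhds (∑ i ∈ Finset.range (k + 1), a i * (1 + c * 0) ^ (i / 2) * (0:ℝ) ^ (k - i))) := by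
    apply tendsto_finset_sum
    intro i _
    have h1 : Tendsto (fun x : ℝ => x⁻¹) atTop (nhds 0) := tendsto_inv_atTop_zero
    exact (tendsto_const_nhds.mul
      ((tendsto_const_nhds.add (tendsto_const_nhds.mul h1)).pow _)).mul (h1.pow _)
  have hval : (∑ i ∈ Finset.range (k + 1), a i * (1 + c * 0) ^ (i / 2) * (0:ℝ) ^ (k - i)) = a k := by
    rw [Finset.sum_eq_single_of_mem k (Finset.self_mem_range_succ k)]
    · simp
    · intro i hi hne
      rw [zero_pow (by simp at hi; omega), mul_zero]
  rw [hval] at key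
  refine key.congr' ?_
  filter_upwards [eventually_gt_atTop (0:ℝ)] with x hx
  have hx0 : x ≠ 0 := ne_of_gt hx
  rw [Finset.sum_div]
  refine Finset.sum_congr rfl fun i hi => ?_
  have hik : i ≤ k := by simpa [Nat.lt_succ_iff] using hi
  have hxk : x ^ k = x ^ (i / 2) * x ^ ((i + 1) / 2) * x ^ (k - i) := by
    rw [← pow_add, ← pow_add]; congr 1; omega
  have h1 : (1 + c * x⁻¹) = (x + c) / x := by field_simp
  rw [h1, div_pow, inv_pow, hxk]
  field_simp

/-- If `f` is fast-converging to a non-constant nice polynomial with positive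
leading coefficient, then `σ ∘ f` is fast-converging to the constant `1`,
where `σ` is the logistic function. -/
theorem stmt_9 (k : ℕ) (a : ℕ → ℝ) (hk : 1 ≤ k) (ha : 0 < a k)
    (p : ℝ → ℝ → ℝ)
    (hp : ∀ x y : ℝ, p x y = ∑ i ∈ Finset.range (k + 1),
      a i * x ^ (i / 2) * y ^ ((i + 1) / 2))
    (f : ℕ → ℕ → ℝ) (hconv : FastConv f p) :
    FastConv (fun m n => 1 / (1 + Real.exp (-(f m n)))) (fun _ _ => 1) := by
  intro r
  set b : ℝ := a k / 2 with hb_def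
  have hb : 0 < b := by positivity
  have hev : ∀ c : ℝ, ∀ᶠ x : ℝ in atTop, b * x ^ k ≤ p (x + c) x := by
    intro c
    have hten : Tendsto (fun x : ℝ => p (x + c) x / x ^ k) atTop (nhds (a k)) := by
      refine (poly_tendsto k a c).congr fun x => ?_
      rw [hp]
    have h2 : ∀ᶠ x : ℝ in atTop, b < p (x + c) x / x ^ k :=
      hten.eventually_const_lt (by linarith)
    filter_upwards [h2, eventually_gt_atTop (0:ℝ)] with x hx hx0
    have hxk : (0:ℝ) < x ^ k := by positivity
    have := (lt_div_iff₀ hxk).mp hx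
    linarith [this]
  obtain ⟨X₁, hX₁⟩ := eventually_atTop.mp ((hev (-1)).and (hev 1))
  have hdecay : ∀ᶠ x : ℝ in atTop, x ^ r * Real.exp (-b * x) < Real.exp (-1) :=
    (tendsto_rpow_mul_exp_neg_mul_atTop_nhds_zero r b hb).eventually
      (gt_mem_nhds (Real.exp_pos _))
  obtain ⟨X₂, hX₂⟩ := eventually_atTop.mp hdecay
  obtain ⟨n₁, hn₁⟩ := hconv 0
  refine ⟨max (max ⌈max X₁ X₂⌉₊ n₁) 1, fun n hn => ?_⟩
  have hnN : ⌈max X₁ X₂⌉₊ ≤ n := le_trans (le_trans (le_max_left _ _) (le_max_left _ _)) hn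
  have hnn₁ : n₁ ≤ n := le_trans (le_trans (le_max_right _ _) (le_max_left _ _)) hn
  have hn1 : 1 ≤ n := le_trans (le_max_right _ _) hn
  have hnR : (1:ℝ) ≤ (n:ℝ) := by exact_mod_cast hn1
  have hn0 : (0:ℝ) < (n:ℝ) := by linarith
  have hmax : max X₁ X₂ ≤ (n:ℝ) := le_trans (Nat.le_ceil _) (by exact_mod_cast hnN)
  have hnX₁ : X₁ ≤ (n:ℝ) := le_trans (le_max_left _ _) hmax
  have hnX₂ : X₂ ≤ (n:ℝ) := le_trans (le_max_right _ _) hmax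
  have hnk : (n:ℝ) ≤ (n:ℝ) ^ k := le_self_pow₀ hnR (by omega)
  have hfb := hn₁ n hnn₁
  rw [Real.rpow_zero] at hfb
  have hnr : (0:ℝ) < (n:ℝ) ^ r := Real.rpow_pos_of_pos hn0 r
  have hx2 := hX₂ (n:ℝ) hnX₂
  have main : ∀ g : ℝ, b * (n:ℝ) - 1 ≤ g →
      |1 / (1 + Real.exp (-g)) - 1| ≤ 1 / (n:ℝ) ^ r := by
    intro g hg
    refine le_trans (sigma_bound g) ?_
    have h1 : Real.exp (-g) ≤ Real.exp (-(b * n) + 1) := by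
      apply Real.exp_le_exp.mpr; linarith
    rw [Real.exp_add] at h1
    have h2 : Real.exp (-(b * n)) * Real.exp 1 * (n:ℝ) ^ r ≤ 1 := by
      have h3 : (n:ℝ) ^ r * Real.exp (-(b * n)) * Real.exp 1 ≤ Real.exp (-1) * Real.exp 1 := by
        have h4 : (n:ℝ) ^ r * Real.exp (-(b * n)) ≤ Real.exp (-1) := by
          rw [show -(b * (n:ℝ)) = -b * n by ring]; exact le_of_lt hx2
        exact mul_le_mul_of_nonneg_right h4 (Real.exp_nonneg _)
      rw [← Real.exp_add] at h3
      simp only [neg_add_cancel, Real.exp_zero] at h3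
      linarith [h3]
    rw [le_div_iff₀ hnr]
    calc Real.exp (-g) * (n:ℝ) ^ r
        ≤ Real.exp (-(b * n)) * Real.exp 1 * (n:ℝ) ^ r :=
          mul_le_mul_of_nonneg_right h1 (le_of_lt hnr)
      _ ≤ 1 := h2
  constructor
  · apply main
    have hp1 : b * ((n:ℝ)) ^ k ≤ p ((n:ℝ) + (-1)) (n:ℝ) := (hX₁ (n:ℝ) hnX₁).1
    have hpe : p ((n:ℝ) - 1) (n:ℝ) = p ((n:ℝ) + (-1)) (n:ℝ) := by ring_nf
    have habs := abs_le.mp hfb.1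
    nlinarith [hnk, hb]
  · apply main
    have hp1 : b * ((n:ℝ)) ^ k ≤ p ((n:ℝ) + 1) (n:ℝ) := (hX₁ (n:ℝ) hnX₁).2
    have habs := abs_le.mp hfb.2
    nlinarith [hnk, hb]

end Main
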